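/- Let f: R^d → R be μ-strongly convex and L-smooth with minimum f*. Run idealized SVAG: θ_{t+1} = θ_t − (1/L)(γ_t ⊙ g_t) with conditionally unbiased stochastic gradients g_t with element-wise variances σ_{t,i}², exact variance adaptation factors γ_{t,i} = ∇f_{t,i}²/(∇f_{t,i}² + σ_{t,i}²), and assume there exist constants c_v, M_v > 0 with Σ_i σ_{t,i}² ≤ c_v ‖∇f(θ_t)‖² + M_v for all t. Then E[f(θ_t) − f*] ∈ O(1/t). -/

import Mathlib

open MeasureTheory

set_option maxHeartbeats 1000000


theorem svag_pullout {Ω : Type*} [mΩ : MeasurableSpace Ω] (P : Measure Ω) [IsProbabilityMeasure P]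
    {m : MeasurableSpace Ω} (hm : m ≤ mΩ) (φ G D : Ω → ℝ)
    (hφ : Measurable[m] φ) (hφG : Integrable (fun ω => φ ω * G ω) P) (hG : Integrable G P)
    (hcond : P[G|m] =ᵐ[P] D) :
    ∫ ω, φ ω * G ω ∂P = ∫ ω, φ ω * D ω ∂P := by
  haveI : SigmaFinite (P.trim hm) := by
    have h := isFiniteMeasure_trim (μ := P) hm
    infer_instance
  have h1 : P[fun ω => φ ω * G ω|m] =ᵐ[P] fun ω => φ ω * (P[G|m]) ω := by
    have := condExp_mul_of_stronglyMeasurable_left (μ := P) hφ.stronglyMeasurable hφG hG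
    filter_upwards [this] with ω hω
    exact hω
  have h2 : (fun ω => φ ω * (P[G|m]) ω) =ᵐ[P] fun ω => φ ω * D ω := by
    filter_upwards [hcond] with ω hω
    rw [hω]
  calc ∫ ω, φ ω * G ω ∂P = ∫ ω, (P[fun ω => φ ω * G ω|m]) ω ∂P := (integral_condExp hm).symm
    _ = ∫ ω, φ ω * D ω ∂P := integral_congr_ae (h1.trans h2)

theorem svag_abs_mul_le (a b : ℝ) : |a * b| ≤ a ^ 2 + b ^ 2 := by
  rw [abs_mul]
  nlinarith [sq_nonneg (|a| - |b|), abs_nonneg a, abs_nonneg b, sq_abs a, sq_abs b]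

theorem svag_norm_sq {d : ℕ} (x : EuclideanSpace ℝ (Fin d)) : ‖x‖ ^ 2 = ∑ i, (x i) ^ 2 := by
  rw [EuclideanSpace.norm_eq, Real.sq_sqrt (by positivity)]
  congr 1; ext i; rw [Real.norm_eq_abs, sq_abs]

theorem svag_inner_eq {d : ℕ} (u v : EuclideanSpace ℝ (Fin d)) :
    (inner ℝ u v : ℝ) = ∑ i, u i * v i := by
  simp [PiLp.inner_apply, RCLike.inner_apply, mul_comm]

theorem svag_gam_le_one (a b : ℝ) : a ^ 2 / (a ^ 2 + b ^ 2) ≤ 1 := by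
  rcases eq_or_lt_of_le (by positivity : (0:ℝ) ≤ a ^ 2 + b ^ 2) with h | h
  · simp [← h]
  · exact (div_le_one h).2 (by nlinarith)

theorem svag_gam_id (a b : ℝ) :
    (a ^ 2 / (a ^ 2 + b ^ 2)) ^ 2 * (b ^ 2 + a ^ 2) = a ^ 2 / (a ^ 2 + b ^ 2) * a ^ 2 := by
  rcases eq_or_lt_of_le (by positivity : (0:ℝ) ≤ a ^ 2 + b ^ 2) with h | h
  · have ha : a ^ 2 = 0 := by nlinarith
    have hb : b ^ 2 = 0 := by nlinarith
    simp [ha, hb]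
  · field_simp
    ring


theorem svag_titu {d : ℕ} (a b : Fin d → ℝ) (Y : ℝ) (ha : ∀ i, 0 ≤ a i)
    (hab : ∀ i, a i ≤ b i) (hY : ∑ i, b i ≤ Y) (hYpos : 0 < Y) :
    (∑ i, a i) ^ 2 / Y ≤ ∑ i, (a i) ^ 2 / b i := by
  classical
  have hb : ∀ i, 0 ≤ b i := fun i => (ha i).trans (hab i)
  set s : Finset (Fin d) := Finset.univ.filter (fun i => 0 < b i) with hs
  have hzero : ∀ i ∈ Finset.univ, i ∉ s → a i = 0 := by
    intro i _ hi
    rw [hs, Finset.mem_filter] at hi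
    push_neg at hi
    have hbi : b i = 0 := le_antisymm (by simpa using hi (Finset.mem_univ i)) (hb i)
    exact le_antisymm (by linarith [hab i]) (ha i)
  have hsum_a : ∑ i ∈ s, a i = ∑ i, a i :=
    Finset.sum_subset (Finset.filter_subset _ _) hzero
  rcases s.eq_empty_or_nonempty with he | hne
  · have : ∑ i, a i = 0 := by rw [← hsum_a, he, Finset.sum_empty]
    rw [this]
    have h0 : (0:ℝ) ^ 2 / Y = 0 := by norm_num
    rw [h0]
    exact Finset.sum_nonneg fun i _ => div_nonneg (sq_nonneg _) (hb i)
  · have hbs : 0 < ∑ i ∈ s, b i :=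
      Finset.sum_pos (fun i hi => (Finset.mem_filter.mp hi).2) hne
    have hbsY : ∑ i ∈ s, b i ≤ Y :=
      le_trans (Finset.sum_le_sum_of_subset_of_nonneg (Finset.filter_subset _ _)
        (fun i _ _ => hb i)) hY
    calc (∑ i, a i) ^ 2 / Y ≤ (∑ i, a i) ^ 2 / (∑ i ∈ s, b i) :=
          div_le_div_of_nonneg_left (sq_nonneg _) hbs hbsY
      _ = (∑ i ∈ s, a i) ^ 2 / (∑ i ∈ s, b i) := by rw [hsum_a]
      _ ≤ ∑ i ∈ s, (a i) ^ 2 / b i :=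
          Finset.sq_sum_div_le_sum_sq_div s a (fun i hi => (Finset.mem_filter.mp hi).2)
      _ ≤ ∑ i, (a i) ^ 2 / b i :=
          Finset.sum_le_sum_of_subset_of_nonneg (Finset.filter_subset _ _)
            (fun i _ _ => div_nonneg (sq_nonneg _) (hb i))

theorem svag_sq_div_mono (a b x y : ℝ) (hapos : 0 < a) (hbpos : 0 < b)
    (hx : 0 ≤ x) (hxy : x ≤ y) : x ^ 2 / (a * x + b) ≤ y ^ 2 / (a * y + b) := by
  have hy : 0 ≤ y := hx.trans hxy
  have hdx : 0 < a * x + b := by positivity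
  have hdy : 0 < a * y + b := by positivity
  rw [div_le_div_iff₀ hdx hdy]
  nlinarith [mul_nonneg (mul_nonneg hapos.le (mul_nonneg hx hy)) (sub_nonneg.2 hxy),
    mul_nonneg (mul_nonneg hbpos.le (add_nonneg hx hy)) (sub_nonneg.2 hxy)]


theorem svag_descent {d : ℕ} (f : EuclideanSpace ℝ (Fin d) → ℝ)
    (gradf : EuclideanSpace ℝ (Fin d) → EuclideanSpace ℝ (Fin d)) (L : ℝ) (hL : 0 < L)
    (hgrad : ∀ x, HasGradientAt f (gradf x) x)
    (hsm : ∀ x y, ‖gradf x - gradf y‖ ≤ L * ‖x - y‖) (x y : EuclideanSpace ℝ (Fin d)) :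
    f y ≤ f x + inner ℝ (gradf x) (y - x) + L / 2 * ‖y - x‖ ^ 2 := by
  have hlip : LipschitzWith (Real.toNNReal L) gradf := by
    apply LipschitzWith.of_dist_le_mul
    intro a b
    rw [dist_eq_norm, dist_eq_norm]
    calc ‖gradf a - gradf b‖ ≤ L * ‖a - b‖ := hsm a b
      _ = (Real.toNNReal L : ℝ) * ‖a - b‖ := by rw [Real.coe_toNNReal L hL.le]
  have hcont : Continuous gradf := hlip.continuous
  set v := y - x with hv
  set c : ℝ → EuclideanSpace ℝ (Fin d) := fun s => x + s • v with hc
  have hcs : ∀ s : ℝ, HasDerivAt c v s := fun s =>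
    (((hasDerivAt_id s).smul_const v).const_add x).congr_deriv (one_smul ℝ v)
  have hφ : ∀ s : ℝ, HasDerivAt (fun s => f (c s)) (inner ℝ (gradf (c s)) v : ℝ) s := by
    intro s
    have h1 := (hgrad (c s)).hasFDerivAt.comp_hasDerivAt s (hcs s)
    simp only [InnerProductSpace.toDual_apply_apply] at h1
    exact h1
  have hcont' : Continuous fun s : ℝ => (inner ℝ (gradf (c s)) v : ℝ) :=
    (hcont.comp (continuous_const.add (continuous_id.smul continuous_const))).inner
      continuous_const
  have hftc : f (c 1) - f (c 0) = ∫ s in (0:ℝ)..1, (inner ℝ (gradf (c s)) v : ℝ) :=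
    (intervalIntegral.integral_eq_sub_of_hasDerivAt (fun s _ => hφ s)
      (hcont'.intervalIntegrable 0 1)).symm
  have hbound : ∀ s ∈ Set.Icc (0:ℝ) 1,
      (inner ℝ (gradf (c s)) v : ℝ) ≤ inner ℝ (gradf x) v + (L * ‖v‖ ^ 2) * s := by
    intro s hs
    have h1 : (inner ℝ (gradf (c s)) v : ℝ) = inner ℝ (gradf x) v + inner ℝ (gradf (c s) - gradf x) v := by
      rw [inner_sub_left]; ring
    rw [h1]
    have h2 : (inner ℝ (gradf (c s) - gradf x) v : ℝ) ≤ ‖gradf (c s) - gradf x‖ * ‖v‖ :=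
      real_inner_le_norm _ _
    have h3 : ‖gradf (c s) - gradf x‖ ≤ L * (s * ‖v‖) := by
      have := hsm (c s) x
      simpa [hc, norm_smul, abs_of_nonneg hs.1] using this
    have h4 : ‖gradf (c s) - gradf x‖ * ‖v‖ ≤ L * (s * ‖v‖) * ‖v‖ :=
      mul_le_mul_of_nonneg_right h3 (norm_nonneg _)
    nlinarith [norm_nonneg v]
  have hint1 : IntervalIntegrable (fun s : ℝ => (inner ℝ (gradf x) v : ℝ) + (L * ‖v‖ ^ 2) * s)
      MeasureTheory.volume 0 1 :=
    (continuous_const.add (continuous_const.mul continuous_id)).intervalIntegrable 0 1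
  have hmono : (∫ s in (0:ℝ)..1, (inner ℝ (gradf (c s)) v : ℝ)) ≤
      ∫ s in (0:ℝ)..1, ((inner ℝ (gradf x) v : ℝ) + (L * ‖v‖ ^ 2) * s) := by
    apply intervalIntegral.integral_mono_on zero_le_one (hcont'.intervalIntegrable 0 1) hint1
    exact hbound
  have hval : (∫ s in (0:ℝ)..1, ((inner ℝ (gradf x) v : ℝ) + (L * ‖v‖ ^ 2) * s)) =
      inner ℝ (gradf x) v + L / 2 * ‖v‖ ^ 2 := by
    have hi2 : IntervalIntegrable (fun s : ℝ => (L * ‖v‖ ^ 2) * s) MeasureTheory.volume 0 1 :=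
      (continuous_const.mul continuous_id).intervalIntegrable 0 1
    rw [intervalIntegral.integral_add intervalIntegrable_const hi2]
    rw [intervalIntegral.integral_const, intervalIntegral.integral_const_mul, integral_id]
    simp; ring
  have hc0 : c 0 = x := by simp [hc]
  have hc1 : c 1 = y := by simp [hc, hv]
  rw [hc0, hc1] at hftc
  linarith [hmono, hftc, hval.le, hval.ge]


theorem svag_grad_sq_le {d : ℕ} (f : EuclideanSpace ℝ (Fin d) → ℝ)
    (gradf : EuclideanSpace ℝ (Fin d) → EuclideanSpace ℝ (Fin d)) (L : ℝ) (hL : 0 < L)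
    (hdesc : ∀ x y, f y ≤ f x + inner ℝ (gradf x) (y - x) + L / 2 * ‖y - x‖ ^ 2)
    (fstar : ℝ) (hmin : ∀ x, fstar ≤ f x) (x : EuclideanSpace ℝ (Fin d)) :
    ‖gradf x‖ ^ 2 ≤ 2 * L * (f x - fstar) := by
  have h := hdesc x (x - L⁻¹ • gradf x)
  have h1 : x - L⁻¹ • gradf x - x = -(L⁻¹ • gradf x) := by abel
  rw [h1] at h
  rw [inner_neg_right, real_inner_smul_right, real_inner_self_eq_norm_sq] at h
  rw [norm_neg, norm_smul, Real.norm_eq_abs, abs_of_nonneg (by positivity : (0:ℝ) ≤ L⁻¹)] at h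
  have h2 := hmin (x - L⁻¹ • gradf x)
  have hkey : L / 2 * (L⁻¹ * ‖gradf x‖) ^ 2 = L⁻¹ / 2 * ‖gradf x‖ ^ 2 := by
    field_simp
  rw [hkey] at h
  have h3 : L⁻¹ / 2 * ‖gradf x‖ ^ 2 ≤ f x - fstar := by linarith
  have h4 := mul_le_mul_of_nonneg_left h3 (by positivity : (0:ℝ) ≤ 2 * L)
  have hL' : L * L⁻¹ = 1 := mul_inv_cancel₀ hL.ne'
  nlinarith [h4]

theorem svag_grad_sq_ge {d : ℕ} (f : EuclideanSpace ℝ (Fin d) → ℝ)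
    (gradf : EuclideanSpace ℝ (Fin d) → EuclideanSpace ℝ (Fin d)) (μ : ℝ) (hμ : 0 < μ)
    (hsc : ∀ x y, f y ≥ f x + inner ℝ (gradf x) (y - x) + μ / 2 * ‖y - x‖ ^ 2)
    (fstar : ℝ) (hatt : ∃ x, f x = fstar) (x : EuclideanSpace ℝ (Fin d)) :
    2 * μ * (f x - fstar) ≤ ‖gradf x‖ ^ 2 := by
  obtain ⟨z, hz⟩ := hatt
  have h := hsc x z
  rw [hz] at h
  have h2 : (inner ℝ (gradf x) (z - x) : ℝ) ≥ -(‖gradf x‖ * ‖z - x‖) := by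
    have := real_inner_le_norm (gradf x) (-(z - x))
    rw [inner_neg_right, norm_neg] at this
    linarith
  nlinarith [sq_nonneg (‖gradf x‖ - μ * ‖z - x‖), norm_nonneg (z - x), norm_nonneg (gradf x)]


theorem svag_step_ineq (K A B C q : ℝ) (hK : 0 < K) (hA : 0 < A) (hB : 0 < B)
    (hC : 0 ≤ C) (hq : 1 ≤ q) (h1 : 2 * A ≤ K * q) (h2 : 2 * B ≤ K * C) :
    C / q - K * (C / q) ^ 2 / (A * (C / q) + B) ≤ C / (q + 1) := by
  have hq0 : 0 < q := lt_of_lt_of_le one_pos hq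
  set x := C / q with hx
  have hx0 : 0 ≤ x := div_nonneg hC hq0.le
  have hxq : x * q = C := div_mul_cancel₀ C hq0.ne'
  have hd : 0 < A * x + B := by positivity
  have hrw : x - K * x ^ 2 / (A * x + B) = (x * (A * x + B) - K * x ^ 2) / (A * x + B) := by
    field_simp
  rw [hrw, div_le_div_iff₀ hd (by linarith : (0:ℝ) < q + 1)]
  rw [← hxq] at h2 ⊢
  nlinarith [mul_le_mul_of_nonneg_right h1 (sq_nonneg x),
    mul_le_mul_of_nonneg_right h2 hx0, mul_nonneg hK.le (sq_nonneg x)]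

theorem svag_h_mono (K A B x y : ℝ) (hK : 0 < K) (hA : 0 < A) (hB : 0 < B) (hKA : K ≤ A)
    (hx : 0 ≤ x) (hxy : x ≤ y) :
    x - K * x ^ 2 / (A * x + B) ≤ y - K * y ^ 2 / (A * y + B) := by
  have hy : 0 ≤ y := hx.trans hxy
  have hdx : 0 < A * x + B := by positivity
  have hdy : 0 < A * y + B := by positivity
  have hyx : 0 ≤ y - x := sub_nonneg.2 hxy
  have ha : 0 ≤ A - K := sub_nonneg.2 hKA
  have keyx : x - K * x ^ 2 / (A * x + B) = (x * ((A - K) * x + B)) / (A * x + B) := by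
    field_simp; ring
  have keyy : y - K * y ^ 2 / (A * y + B) = (y * ((A - K) * y + B)) / (A * y + B) := by
    field_simp; ring
  rw [keyx, keyy, div_le_div_iff₀ hdx hdy]
  nlinarith [mul_nonneg (mul_nonneg (mul_nonneg ha hA.le) (mul_nonneg hx hy)) hyx,
    mul_nonneg (mul_nonneg ha hB.le) (mul_nonneg (add_nonneg hx hy) hyx),
    mul_nonneg (mul_nonneg hB.le hB.le) hyx]

theorem svag_rec (e : ℕ → ℝ) (K A B : ℝ) (hK : 0 < K) (hA : 0 < A) (hB : 0 < B)
    (hKA : K ≤ A) (he0 : ∀ t, 0 ≤ e t)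
    (hrec : ∀ t, e (t + 1) ≤ e t - K * (e t) ^ 2 / (A * e t + B)) :
    ∃ C : ℝ, ∀ t : ℕ, 0 < t → e t ≤ C / t := by
  set T : ℕ := ⌈2 * A / K⌉₊ + 1 with hT
  have hT1 : 1 ≤ T := Nat.le_add_left 1 _
  have hTA : 2 * A ≤ K * T := by
    have h1 : 2 * A / K ≤ (T : ℝ) := by
      have h := Nat.le_ceil (2 * A / K)
      have h2 : ((⌈2 * A / K⌉₊ : ℕ) : ℝ) ≤ (T : ℝ) := by exact_mod_cast Nat.le_succ _
      linarith
    calc 2 * A = K * (2 * A / K) := by field_simp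
      _ ≤ K * T := mul_le_mul_of_nonneg_left h1 hK.le
  set C : ℝ := max (2 * B / K) ((T : ℝ) * e 0) with hC
  have hC2B : 2 * B ≤ K * C := by
    have h1 : 2 * B / K ≤ C := le_max_left _ _
    calc 2 * B = K * (2 * B / K) := by field_simp
      _ ≤ K * C := mul_le_mul_of_nonneg_left h1 hK.le
  have hCnn : 0 ≤ C := le_trans (by positivity) (le_max_left _ _)
  have hdec : ∀ t, e (t + 1) ≤ e t := by
    intro t
    have h1 := hrec t
    have h3 : 0 < A * e t + B := by nlinarith [he0 t]
    have h2 : 0 ≤ K * (e t) ^ 2 / (A * e t + B) := div_nonneg (by positivity) h3.le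
    linarith
  have hmon : ∀ t, e t ≤ e 0 := by
    intro t; induction t with
    | zero => exact le_rfl
    | succ n ih => exact (hdec n).trans ih
  refine ⟨C, ?_⟩
  have key : ∀ t : ℕ, T ≤ t → e t ≤ C / t := by
    intro t ht
    induction t, ht using Nat.le_induction with
    | base =>
      have h1 : e T ≤ e 0 := hmon T
      have hTpos : (0:ℝ) < (T:ℝ) := by exact_mod_cast hT1
      rw [le_div_iff₀ hTpos]
      calc e T * T ≤ e 0 * T := mul_le_mul_of_nonneg_right h1 hTpos.le
        _ ≤ C := by rw [mul_comm]; exact le_max_right _ _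
    | succ n hn ih =>
      have hn1 : (1:ℝ) ≤ (n:ℝ) := by exact_mod_cast hT1.trans hn
      have hKn : 2 * A ≤ K * n := by
        have h3 : (T:ℝ) ≤ (n:ℝ) := by exact_mod_cast hn
        nlinarith
      have step2 : e n - K * (e n) ^ 2 / (A * e n + B) ≤
          C / n - K * (C / n) ^ 2 / (A * (C / n) + B) :=
        svag_h_mono K A B (e n) (C / n) hK hA hB hKA (he0 n) ih
      have step3 : C / n - K * (C / n) ^ 2 / (A * (C / n) + B) ≤ C / (n + 1) :=
        svag_step_ineq K A B C n hK hA hB hCnn hn1 hKn hC2B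
      have hcast : ((n:ℝ) + 1) = ((n + 1 : ℕ) : ℝ) := by push_cast; ring
      rw [← hcast]
      linarith [hrec n]
  intro t ht
  by_cases h : T ≤ t
  · exact key t h
  · push_neg at h
    have h1 : e t ≤ e 0 := hmon t
    have htpos : (0:ℝ) < (t:ℝ) := by exact_mod_cast ht
    rw [le_div_iff₀ htpos]
    have h2 : (t:ℝ) ≤ (T:ℝ) := by exact_mod_cast h.le
    have h3 : (T : ℝ) * e 0 ≤ C := le_max_right _ _
    nlinarith [he0 0, he0 t]

theorem svag_onestep (d : ℕ) {Ω : Type*} [MeasurableSpace Ω]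
    (P : Measure Ω) [IsProbabilityMeasure P]
    (f : EuclideanSpace ℝ (Fin d) → ℝ)
    (gradf : EuclideanSpace ℝ (Fin d) → EuclideanSpace ℝ (Fin d))
    (μ L : ℝ) (hμ : 0 < μ) (hL : 0 < L)
    (hgrad : ∀ x, HasGradientAt f (gradf x) x)
    (hsc : ∀ x y, f y ≥ f x + inner ℝ (gradf x) (y - x) + μ / 2 * ‖y - x‖ ^ 2)
    (hsm : ∀ x y, ‖gradf x - gradf y‖ ≤ L * ‖x - y‖)
    (fstar : ℝ) (hmin : ∀ x, fstar ≤ f x) (hatt : ∃ x, f x = fstar)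
    (θ : ℕ → Ω → EuclideanSpace ℝ (Fin d))
    (g : ℕ → Ω → EuclideanSpace ℝ (Fin d)) (σ : ℕ → Ω → Fin d → ℝ)
    (hmeasθ : ∀ t, Measurable (θ t)) (hmeasg : ∀ t, Measurable (g t))
    (hmeasσ : ∀ t i, Measurable[MeasurableSpace.comap (θ t) inferInstance]
      (fun ω => σ t ω i))
    (hintf : ∀ t, Integrable (fun ω => f (θ t ω)) P)
    (hintg2 : ∀ t i, Integrable (fun ω => (g t ω i) ^ 2) P)
    (hmean : ∀ t i,
      P[fun ω => g t ω i | MeasurableSpace.comap (θ t) inferInstance]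
        =ᵐ[P] fun ω => gradf (θ t ω) i)
    (hvar : ∀ t i,
      P[fun ω => (g t ω i - gradf (θ t ω) i) ^ 2 | MeasurableSpace.comap (θ t) inferInstance]
        =ᵐ[P] fun ω => (σ t ω i) ^ 2)
    (hstep : ∀ t ω i, θ (t + 1) ω i =
      θ t ω i - (1 / L) *
        ((gradf (θ t ω) i) ^ 2 / ((gradf (θ t ω) i) ^ 2 + (σ t ω i) ^ 2) * g t ω i))
    (c_v M_v : ℝ) (hc_v : 0 < c_v) (hM_v : 0 < M_v)
    (hnoise : ∀ t ω, ∑ i, (σ t ω i) ^ 2 ≤ c_v * ‖gradf (θ t ω)‖ ^ 2 + M_v) (t : ℕ) :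
    ∫ ω, (f (θ (t + 1) ω) - fstar) ∂P ≤
      ∫ ω, (f (θ t ω) - fstar) ∂P -
        (2 * (min μ L) ^ 2 / L) * (∫ ω, (f (θ t ω) - fstar) ∂P) ^ 2 /
          (2 * min μ L * (1 + c_v) * (∫ ω, (f (θ t ω) - fstar) ∂P) + M_v) := by
  classical
  have hdesc : ∀ x y, f y ≤ f x + inner ℝ (gradf x) (y - x) + L / 2 * ‖y - x‖ ^ 2 :=
    fun x y => svag_descent f gradf L hL hgrad hsm x y
  have hm : MeasurableSpace.comap (θ t) inferInstance ≤ _ := (hmeasθ t).comap_le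
  have hgcont : Continuous gradf := by
    have hlip : LipschitzWith (Real.toNNReal L) gradf := by
      apply LipschitzWith.of_dist_le_mul
      intro a b
      rw [dist_eq_norm, dist_eq_norm]
      calc ‖gradf a - gradf b‖ ≤ L * ‖a - b‖ := hsm a b
        _ = (Real.toNNReal L : ℝ) * ‖a - b‖ := by rw [Real.coe_toNNReal L hL.le]
    exact hlip.continuous
  have hθm : Measurable[MeasurableSpace.comap (θ t) inferInstance] (θ t) :=
    Measurable.of_comap_le le_rfl
  have hDm : ∀ i, Measurable[MeasurableSpace.comap (θ t) inferInstance]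
      (fun ω => gradf (θ t ω) i) :=
    fun i => (measurable_pi_apply i).comp ((WithLp.measurable_ofLp _ _).comp (hgcont.measurable.comp hθm))
  have hDmeas : ∀ i, Measurable (fun ω => gradf (θ t ω) i) :=
    fun i => (hDm i).mono hm le_rfl
  have hSmeas : ∀ i, Measurable (fun ω => σ t ω i) := fun i => (hmeasσ t i).mono hm le_rfl
  have hGmeas : ∀ i, Measurable (fun ω => g t ω i) :=
    fun i => (measurable_pi_apply i).comp ((WithLp.measurable_ofLp _ _).comp (hmeasg t))
  have hγm : ∀ i, Measurable[MeasurableSpace.comap (θ t) inferInstance]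
      (fun ω => (gradf (θ t ω) i) ^ 2 / ((gradf (θ t ω) i) ^ 2 + (σ t ω i) ^ 2)) :=
    fun i => ((hDm i).pow_const 2).div (((hDm i).pow_const 2).add ((hmeasσ t i).pow_const 2))
  have hγmeas : ∀ i, Measurable
      (fun ω => (gradf (θ t ω) i) ^ 2 / ((gradf (θ t ω) i) ^ 2 + (σ t ω i) ^ 2)) :=
    fun i => (hγm i).mono hm le_rfl
  have hγ0 : ∀ i ω, 0 ≤ (gradf (θ t ω) i) ^ 2 / ((gradf (θ t ω) i) ^ 2 + (σ t ω i) ^ 2) :=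
    fun i ω => by positivity
  have hγ1 : ∀ i ω, (gradf (θ t ω) i) ^ 2 / ((gradf (θ t ω) i) ^ 2 + (σ t ω i) ^ 2) ≤ 1 :=
    fun i ω => svag_gam_le_one _ _
  -- integrability
  have intsub : Integrable (fun ω => f (θ t ω) - fstar) P :=
    (hintf t).sub (integrable_const fstar)
  have hXle : ∀ ω, ∑ i, (gradf (θ t ω) i) ^ 2 ≤ 2 * L * (f (θ t ω) - fstar) := fun ω => by
    rw [← svag_norm_sq]
    exact svag_grad_sq_le f gradf L hL hdesc fstar hmin _
  have hXmeas : Measurable (fun ω => ∑ i, (gradf (θ t ω) i) ^ 2) :=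
    Finset.measurable_sum _ (fun i _ => (hDmeas i).pow_const 2)
  have hX0 : ∀ ω, 0 ≤ ∑ i, (gradf (θ t ω) i) ^ 2 :=
    fun ω => Finset.sum_nonneg fun i _ => sq_nonneg _
  have intX : Integrable (fun ω => ∑ i, (gradf (θ t ω) i) ^ 2) P := by
    apply Integrable.mono' (intsub.const_mul (2 * L)) hXmeas.aestronglyMeasurable
    filter_upwards with ω
    rw [Real.norm_eq_abs, abs_of_nonneg (hX0 ω)]
    exact hXle ω
  have intD2 : ∀ i, Integrable (fun ω => (gradf (θ t ω) i) ^ 2) P := fun i => by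
    apply Integrable.mono' intX ((hDmeas i).pow_const 2).aestronglyMeasurable
    filter_upwards with ω
    rw [Real.norm_eq_abs, abs_of_nonneg (sq_nonneg _)]
    exact Finset.single_le_sum (f := fun j => (gradf (θ t ω) j) ^ 2)
      (fun j _ => sq_nonneg _) (Finset.mem_univ i)
  have intG : ∀ i, Integrable (fun ω => g t ω i) P := fun i => by
    apply Integrable.mono' ((integrable_const (1:ℝ)).add (hintg2 t i))
      (hGmeas i).aestronglyMeasurable
    filter_upwards with ω
    simp only [Pi.add_apply]
    rw [Real.norm_eq_abs]
    nlinarith [sq_nonneg (|g t ω i| - 1), sq_abs (g t ω i), abs_nonneg (g t ω i)]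
  have intGmD2 : ∀ i, Integrable (fun ω => (g t ω i - gradf (θ t ω) i) ^ 2) P := fun i => by
    apply Integrable.mono' (((hintg2 t i).add (intD2 i)).const_mul 2)
      (((hGmeas i).sub (hDmeas i)).pow_const 2).aestronglyMeasurable
    filter_upwards with ω
    simp only [Pi.mul_apply, Pi.div_apply, Pi.sub_apply, Pi.pow_apply]
    simp only [Pi.add_apply]
    rw [Real.norm_eq_abs, abs_of_nonneg (sq_nonneg _)]
    nlinarith [sq_nonneg (g t ω i + gradf (θ t ω) i)]
  -- abbreviation-free γ-weighted integrabilities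
  have intφG : ∀ i, Integrable (fun ω =>
      (gradf (θ t ω) i) ^ 2 / ((gradf (θ t ω) i) ^ 2 + (σ t ω i) ^ 2) * gradf (θ t ω) i
        * g t ω i) P := fun i => by
    apply Integrable.mono' ((intD2 i).add (hintg2 t i))
      (((hγmeas i).mul (hDmeas i)).mul (hGmeas i)).aestronglyMeasurable
    filter_upwards with ω
    simp only [Pi.mul_apply, Pi.div_apply, Pi.sub_apply, Pi.pow_apply]
    simp only [Pi.add_apply]
    rw [Real.norm_eq_abs, mul_assoc, abs_mul, abs_div]
    calc |(gradf (θ t ω) i) ^ 2| / |(gradf (θ t ω) i) ^ 2 + (σ t ω i) ^ 2|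
          * |gradf (θ t ω) i * g t ω i|
        ≤ 1 * |gradf (θ t ω) i * g t ω i| := by
          apply mul_le_mul_of_nonneg_right _ (abs_nonneg _)
          rw [abs_of_nonneg (sq_nonneg _), abs_of_nonneg (by positivity)]
          exact hγ1 i ω
      _ ≤ (gradf (θ t ω) i) ^ 2 + (g t ω i) ^ 2 := by
          rw [one_mul]; exact svag_abs_mul_le _ _
  -- more γ-weighted integrability
  have intγD2 : ∀ i, Integrable (fun ω =>
      (gradf (θ t ω) i) ^ 2 / ((gradf (θ t ω) i) ^ 2 + (σ t ω i) ^ 2)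
        * (gradf (θ t ω) i) ^ 2) P := fun i => by
    apply Integrable.mono' (intD2 i)
      ((hγmeas i).mul ((hDmeas i).pow_const 2)).aestronglyMeasurable
    filter_upwards with ω
    simp only [Pi.mul_apply, Pi.div_apply, Pi.sub_apply, Pi.pow_apply]
    rw [Real.norm_eq_abs, abs_of_nonneg (mul_nonneg (hγ0 i ω) (sq_nonneg _))]
    exact mul_le_of_le_one_left (sq_nonneg _) (hγ1 i ω)
  have intφD : ∀ i, Integrable (fun ω =>
      (gradf (θ t ω) i) ^ 2 / ((gradf (θ t ω) i) ^ 2 + (σ t ω i) ^ 2) * gradf (θ t ω) i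
        * gradf (θ t ω) i) P := fun i => by
    apply ((intγD2 i).congr ?_)
    filter_upwards with ω
    ring
  have intψG2 : ∀ i, Integrable (fun ω =>
      ((gradf (θ t ω) i) ^ 2 / ((gradf (θ t ω) i) ^ 2 + (σ t ω i) ^ 2)) ^ 2
        * (g t ω i) ^ 2) P := fun i => by
    apply Integrable.mono' (hintg2 t i)
      (((hγmeas i).pow_const 2).mul ((hGmeas i).pow_const 2)).aestronglyMeasurable
    filter_upwards with ω
    rw [Real.norm_eq_abs, abs_of_nonneg (mul_nonneg (sq_nonneg _) (sq_nonneg _))]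
    exact mul_le_of_le_one_left (sq_nonneg _)
      (pow_le_one₀ (hγ0 i ω) (hγ1 i ω))
  have intψGmD2 : ∀ i, Integrable (fun ω =>
      ((gradf (θ t ω) i) ^ 2 / ((gradf (θ t ω) i) ^ 2 + (σ t ω i) ^ 2)) ^ 2
        * (g t ω i - gradf (θ t ω) i) ^ 2) P := fun i => by
    apply Integrable.mono' (intGmD2 i)
      (((hγmeas i).pow_const 2).mul
        (((hGmeas i).sub (hDmeas i)).pow_const 2)).aestronglyMeasurable
    filter_upwards with ω
    rw [Real.norm_eq_abs, abs_of_nonneg (mul_nonneg (sq_nonneg _) (sq_nonneg _))]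
    exact mul_le_of_le_one_left (sq_nonneg _) (pow_le_one₀ (hγ0 i ω) (hγ1 i ω))
  have intψDG : ∀ i, Integrable (fun ω =>
      ((gradf (θ t ω) i) ^ 2 / ((gradf (θ t ω) i) ^ 2 + (σ t ω i) ^ 2)) ^ 2
        * gradf (θ t ω) i * g t ω i) P := fun i => by
    apply Integrable.mono' ((intD2 i).add (hintg2 t i))
      ((((hγmeas i).pow_const 2).mul (hDmeas i)).mul (hGmeas i)).aestronglyMeasurable
    filter_upwards with ω
    simp only [Pi.mul_apply, Pi.div_apply, Pi.sub_apply, Pi.pow_apply]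
    simp only [Pi.add_apply]
    rw [Real.norm_eq_abs, mul_assoc, abs_mul]
    calc |((gradf (θ t ω) i) ^ 2 / ((gradf (θ t ω) i) ^ 2 + (σ t ω i) ^ 2)) ^ 2|
          * |gradf (θ t ω) i * g t ω i|
        ≤ 1 * |gradf (θ t ω) i * g t ω i| := by
          apply mul_le_mul_of_nonneg_right _ (abs_nonneg _)
          rw [abs_of_nonneg (sq_nonneg _)]
          exact pow_le_one₀ (hγ0 i ω) (hγ1 i ω)
      _ ≤ (gradf (θ t ω) i) ^ 2 + (g t ω i) ^ 2 := by
          rw [one_mul]; exact svag_abs_mul_le _ _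
  have intψD2 : ∀ i, Integrable (fun ω =>
      ((gradf (θ t ω) i) ^ 2 / ((gradf (θ t ω) i) ^ 2 + (σ t ω i) ^ 2)) ^ 2
        * (gradf (θ t ω) i) ^ 2) P := fun i => by
    apply Integrable.mono' (intD2 i)
      (((hγmeas i).pow_const 2).mul ((hDmeas i).pow_const 2)).aestronglyMeasurable
    filter_upwards with ω
    rw [Real.norm_eq_abs, abs_of_nonneg (mul_nonneg (sq_nonneg _) (sq_nonneg _))]
    exact mul_le_of_le_one_left (sq_nonneg _) (pow_le_one₀ (hγ0 i ω) (hγ1 i ω))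
  have intψS2 : ∀ i, Integrable (fun ω =>
      ((gradf (θ t ω) i) ^ 2 / ((gradf (θ t ω) i) ^ 2 + (σ t ω i) ^ 2)) ^ 2
        * (σ t ω i) ^ 2) P := fun i => by
    have h1 : Integrable (fun ω =>
        ((gradf (θ t ω) i) ^ 2 / ((gradf (θ t ω) i) ^ 2 + (σ t ω i) ^ 2)) ^ 2
          * (P[fun ω => (g t ω i - gradf (θ t ω) i) ^ 2 |
              MeasurableSpace.comap (θ t) inferInstance]) ω) P := by
      apply Integrable.bdd_mul integrable_condExp
        ((hγmeas i).pow_const 2).aestronglyMeasurable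
      refine ae_of_all _ fun ω => ?_
      rw [Real.norm_eq_abs, abs_of_nonneg (sq_nonneg _)]
      exact pow_le_one₀ (hγ0 i ω) (hγ1 i ω)
    apply h1.congr
    filter_upwards [hvar t i] with ω hω
    rw [hω]
  -- conditional expectation identities
  have keyA : ∀ i, (∫ ω, (gradf (θ t ω) i) ^ 2 / ((gradf (θ t ω) i) ^ 2 + (σ t ω i) ^ 2)
      * gradf (θ t ω) i * g t ω i ∂P) =
      ∫ ω, (gradf (θ t ω) i) ^ 2 / ((gradf (θ t ω) i) ^ 2 + (σ t ω i) ^ 2)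
        * (gradf (θ t ω) i) ^ 2 ∂P := fun i => by
    have h := svag_pullout P hm
      (fun ω => (gradf (θ t ω) i) ^ 2 / ((gradf (θ t ω) i) ^ 2 + (σ t ω i) ^ 2)
        * gradf (θ t ω) i)
      (fun ω => g t ω i) (fun ω => gradf (θ t ω) i)
      ((hγm i).mul (hDm i)) (intφG i) (intG i) (hmean t i)
    rw [h]
    apply integral_congr_ae
    filter_upwards with ω
    ring
  have keyB1 : ∀ i, (∫ ω, ((gradf (θ t ω) i) ^ 2 / ((gradf (θ t ω) i) ^ 2 + (σ t ω i) ^ 2)) ^ 2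
      * (g t ω i - gradf (θ t ω) i) ^ 2 ∂P) =
      ∫ ω, ((gradf (θ t ω) i) ^ 2 / ((gradf (θ t ω) i) ^ 2 + (σ t ω i) ^ 2)) ^ 2
        * (σ t ω i) ^ 2 ∂P := fun i =>
    svag_pullout P hm
      (fun ω => ((gradf (θ t ω) i) ^ 2 / ((gradf (θ t ω) i) ^ 2 + (σ t ω i) ^ 2)) ^ 2)
      (fun ω => (g t ω i - gradf (θ t ω) i) ^ 2) (fun ω => (σ t ω i) ^ 2)
      ((hγm i).pow_const 2) (intψGmD2 i) (intGmD2 i) (hvar t i)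
  have keyB2 : ∀ i, (∫ ω, ((gradf (θ t ω) i) ^ 2 / ((gradf (θ t ω) i) ^ 2 + (σ t ω i) ^ 2)) ^ 2
      * gradf (θ t ω) i * g t ω i ∂P) =
      ∫ ω, ((gradf (θ t ω) i) ^ 2 / ((gradf (θ t ω) i) ^ 2 + (σ t ω i) ^ 2)) ^ 2
        * (gradf (θ t ω) i) ^ 2 ∂P := fun i => by
    have h := svag_pullout P hm
      (fun ω => ((gradf (θ t ω) i) ^ 2 / ((gradf (θ t ω) i) ^ 2 + (σ t ω i) ^ 2)) ^ 2
        * gradf (θ t ω) i)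
      (fun ω => g t ω i) (fun ω => gradf (θ t ω) i)
      (((hγm i).pow_const 2).mul (hDm i)) (intψDG i) (intG i) (hmean t i)
    rw [h]
    apply integral_congr_ae
    filter_upwards with ω
    ring
  have keyB : ∀ i, (∫ ω, ((gradf (θ t ω) i) ^ 2 / ((gradf (θ t ω) i) ^ 2 + (σ t ω i) ^ 2)) ^ 2
      * (g t ω i) ^ 2 ∂P) =
      ∫ ω, (gradf (θ t ω) i) ^ 2 / ((gradf (θ t ω) i) ^ 2 + (σ t ω i) ^ 2)
        * (gradf (θ t ω) i) ^ 2 ∂P := fun i => by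
    have hsplit : (∫ ω, ((gradf (θ t ω) i) ^ 2 / ((gradf (θ t ω) i) ^ 2 + (σ t ω i) ^ 2)) ^ 2
        * (g t ω i) ^ 2 ∂P) =
        (∫ ω, ((gradf (θ t ω) i) ^ 2 / ((gradf (θ t ω) i) ^ 2 + (σ t ω i) ^ 2)) ^ 2
          * (g t ω i - gradf (θ t ω) i) ^ 2 ∂P)
        + ((2 : ℝ) * ∫ ω, ((gradf (θ t ω) i) ^ 2 / ((gradf (θ t ω) i) ^ 2 + (σ t ω i) ^ 2)) ^ 2
            * gradf (θ t ω) i * g t ω i ∂P)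
        - ∫ ω, ((gradf (θ t ω) i) ^ 2 / ((gradf (θ t ω) i) ^ 2 + (σ t ω i) ^ 2)) ^ 2
            * (gradf (θ t ω) i) ^ 2 ∂P := by
      have e1 : (∫ ω, ((gradf (θ t ω) i) ^ 2 / ((gradf (θ t ω) i) ^ 2 + (σ t ω i) ^ 2)) ^ 2
          * (g t ω i) ^ 2 ∂P) =
          ∫ ω, ((((gradf (θ t ω) i) ^ 2 / ((gradf (θ t ω) i) ^ 2 + (σ t ω i) ^ 2)) ^ 2
              * (g t ω i - gradf (θ t ω) i) ^ 2
            + 2 * (((gradf (θ t ω) i) ^ 2 / ((gradf (θ t ω) i) ^ 2 + (σ t ω i) ^ 2)) ^ 2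
              * gradf (θ t ω) i * g t ω i))
            - ((gradf (θ t ω) i) ^ 2 / ((gradf (θ t ω) i) ^ 2 + (σ t ω i) ^ 2)) ^ 2
              * (gradf (θ t ω) i) ^ 2) ∂P := by
        apply integral_congr_ae
        filter_upwards with ω
        ring
      have hadd : Integrable (fun ω =>
          ((gradf (θ t ω) i) ^ 2 / ((gradf (θ t ω) i) ^ 2 + (σ t ω i) ^ 2)) ^ 2
            * (g t ω i - gradf (θ t ω) i) ^ 2
          + 2 * (((gradf (θ t ω) i) ^ 2 / ((gradf (θ t ω) i) ^ 2 + (σ t ω i) ^ 2)) ^ 2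
            * gradf (θ t ω) i * g t ω i)) P :=
        (intψGmD2 i).add ((intψDG i).const_mul 2)
      rw [e1, integral_sub hadd (intψD2 i),
        integral_add (intψGmD2 i) ((intψDG i).const_mul 2), integral_const_mul]
    rw [hsplit, keyB1 i, keyB2 i]
    have hfin : (∫ ω, (((gradf (θ t ω) i) ^ 2 / ((gradf (θ t ω) i) ^ 2 + (σ t ω i) ^ 2)) ^ 2
        * (σ t ω i) ^ 2 + ((gradf (θ t ω) i) ^ 2 / ((gradf (θ t ω) i) ^ 2 + (σ t ω i) ^ 2)) ^ 2
        * (gradf (θ t ω) i) ^ 2) ∂P) =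
        ∫ ω, (gradf (θ t ω) i) ^ 2 / ((gradf (θ t ω) i) ^ 2 + (σ t ω i) ^ 2)
          * (gradf (θ t ω) i) ^ 2 ∂P := by
      apply integral_congr_ae
      filter_upwards with ω
      have h1 : ((gradf (θ t ω) i) ^ 2 / ((gradf (θ t ω) i) ^ 2 + (σ t ω i) ^ 2)) ^ 2
          * (σ t ω i) ^ 2 + ((gradf (θ t ω) i) ^ 2 / ((gradf (θ t ω) i) ^ 2 + (σ t ω i) ^ 2)) ^ 2
          * (gradf (θ t ω) i) ^ 2 =
          ((gradf (θ t ω) i) ^ 2 / ((gradf (θ t ω) i) ^ 2 + (σ t ω i) ^ 2)) ^ 2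
            * ((σ t ω i) ^ 2 + (gradf (θ t ω) i) ^ 2) := by ring
      rw [h1, svag_gam_id]
    rw [integral_add (intψS2 i) (intψD2 i)] at hfin
    linarith [hfin]
  -- pointwise descent
  have hpt : ∀ ω, f (θ (t + 1) ω) ≤ f (θ t ω)
      + (-(1 / L)) * (∑ i, (gradf (θ t ω) i) ^ 2 / ((gradf (θ t ω) i) ^ 2 + (σ t ω i) ^ 2)
          * gradf (θ t ω) i * g t ω i)
      + (1 / (2 * L)) * ∑ i, ((gradf (θ t ω) i) ^ 2 / ((gradf (θ t ω) i) ^ 2 + (σ t ω i) ^ 2)) ^ 2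
          * (g t ω i) ^ 2 := by
    intro ω
    have hd := hdesc (θ t ω) (θ (t + 1) ω)
    have hv : ∀ i, (θ (t + 1) ω - θ t ω) i = -((1 / L) *
        ((gradf (θ t ω) i) ^ 2 / ((gradf (θ t ω) i) ^ 2 + (σ t ω i) ^ 2) * g t ω i)) := by
      intro i
      have h1 : (θ (t + 1) ω - θ t ω) i = θ (t + 1) ω i - θ t ω i := rfl
      rw [h1, hstep t ω i]
      ring
    have e1 : (inner ℝ (gradf (θ t ω)) (θ (t + 1) ω - θ t ω) : ℝ) =
        -(1 / L) * (∑ i, (gradf (θ t ω) i) ^ 2 / ((gradf (θ t ω) i) ^ 2 + (σ t ω i) ^ 2)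
          * gradf (θ t ω) i * g t ω i) := by
      rw [svag_inner_eq, Finset.mul_sum]
      apply Finset.sum_congr rfl
      intro i _
      rw [hv i]
      ring
    have e2 : L / 2 * ‖θ (t + 1) ω - θ t ω‖ ^ 2 =
        (1 / (2 * L)) * ∑ i, ((gradf (θ t ω) i) ^ 2 / ((gradf (θ t ω) i) ^ 2 + (σ t ω i) ^ 2)) ^ 2
          * (g t ω i) ^ 2 := by
      have hc : L / 2 * (1 / L) ^ 2 = 1 / (2 * L) := by
        field_simp
      rw [svag_norm_sq, Finset.mul_sum, Finset.mul_sum]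
      apply Finset.sum_congr rfl
      intro i _
      rw [hv i]
      calc L / 2 * (-(1 / L * ((gradf (θ t ω) i) ^ 2 / ((gradf (θ t ω) i) ^ 2 + (σ t ω i) ^ 2)
            * g t ω i))) ^ 2
          = (L / 2 * (1 / L) ^ 2) * (((gradf (θ t ω) i) ^ 2 / ((gradf (θ t ω) i) ^ 2
            + (σ t ω i) ^ 2)) ^ 2 * (g t ω i) ^ 2) := by ring
        _ = 1 / (2 * L) * (((gradf (θ t ω) i) ^ 2 / ((gradf (θ t ω) i) ^ 2
            + (σ t ω i) ^ 2)) ^ 2 * (g t ω i) ^ 2) := by rw [hc]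
    rw [e1, e2] at hd
    linarith
  -- integrate
  have intSum1 : Integrable (fun ω =>
      ∑ i, (gradf (θ t ω) i) ^ 2 / ((gradf (θ t ω) i) ^ 2 + (σ t ω i) ^ 2)
        * gradf (θ t ω) i * g t ω i) P :=
    integrable_finset_sum _ (fun i _ => intφG i)
  have intSum2 : Integrable (fun ω =>
      ∑ i, ((gradf (θ t ω) i) ^ 2 / ((gradf (θ t ω) i) ^ 2 + (σ t ω i) ^ 2)) ^ 2
        * (g t ω i) ^ 2) P :=
    integrable_finset_sum _ (fun i _ => intψG2 i)
  have intRHS : Integrable (fun ω => f (θ t ω)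
      + (-(1 / L)) * (∑ i, (gradf (θ t ω) i) ^ 2 / ((gradf (θ t ω) i) ^ 2 + (σ t ω i) ^ 2)
          * gradf (θ t ω) i * g t ω i)
      + (1 / (2 * L)) * ∑ i, ((gradf (θ t ω) i) ^ 2 / ((gradf (θ t ω) i) ^ 2 + (σ t ω i) ^ 2)) ^ 2
          * (g t ω i) ^ 2) P :=
    ((hintf t).add (intSum1.const_mul _)).add (intSum2.const_mul _)
  have hIneq1 : (∫ ω, f (θ (t + 1) ω) ∂P) ≤ ∫ ω, (f (θ t ω)
      + (-(1 / L)) * (∑ i, (gradf (θ t ω) i) ^ 2 / ((gradf (θ t ω) i) ^ 2 + (σ t ω i) ^ 2)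
          * gradf (θ t ω) i * g t ω i)
      + (1 / (2 * L)) * ∑ i, ((gradf (θ t ω) i) ^ 2 / ((gradf (θ t ω) i) ^ 2 + (σ t ω i) ^ 2)) ^ 2
          * (g t ω i) ^ 2) ∂P :=
    integral_mono (hintf (t + 1)) intRHS hpt
  have hExp : (∫ ω, (f (θ t ω)
      + (-(1 / L)) * (∑ i, (gradf (θ t ω) i) ^ 2 / ((gradf (θ t ω) i) ^ 2 + (σ t ω i) ^ 2)
          * gradf (θ t ω) i * g t ω i)
      + (1 / (2 * L)) * ∑ i, ((gradf (θ t ω) i) ^ 2 / ((gradf (θ t ω) i) ^ 2 + (σ t ω i) ^ 2)) ^ 2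
          * (g t ω i) ^ 2) ∂P) =
      (∫ ω, f (θ t ω) ∂P)
      + (-(1 / L)) * (∑ i, ∫ ω, (gradf (θ t ω) i) ^ 2 / ((gradf (θ t ω) i) ^ 2 + (σ t ω i) ^ 2)
          * gradf (θ t ω) i * g t ω i ∂P)
      + (1 / (2 * L)) * ∑ i, ∫ ω, ((gradf (θ t ω) i) ^ 2 / ((gradf (θ t ω) i) ^ 2
          + (σ t ω i) ^ 2)) ^ 2 * (g t ω i) ^ 2 ∂P := by
    have hadd1 : Integrable (fun ω => f (θ t ω)
        + (-(1 / L)) * (∑ i, (gradf (θ t ω) i) ^ 2 / ((gradf (θ t ω) i) ^ 2 + (σ t ω i) ^ 2)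
            * gradf (θ t ω) i * g t ω i)) P := (hintf t).add (intSum1.const_mul _)
    rw [integral_add hadd1 (intSum2.const_mul _),
      integral_add (hintf t) (intSum1.const_mul _), integral_const_mul, integral_const_mul,
      integral_finset_sum _ (fun i _ => intφG i), integral_finset_sum _ (fun i _ => intψG2 i)]
  have hE : (∫ ω, f (θ (t + 1) ω) ∂P) ≤ (∫ ω, f (θ t ω) ∂P)
      - (1 / (2 * L)) * ∑ i, ∫ ω, (gradf (θ t ω) i) ^ 2 / ((gradf (θ t ω) i) ^ 2 + (σ t ω i) ^ 2)
        * (gradf (θ t ω) i) ^ 2 ∂P := by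
    rw [hExp] at hIneq1
    have h1 : (∑ i, ∫ ω, (gradf (θ t ω) i) ^ 2 / ((gradf (θ t ω) i) ^ 2 + (σ t ω i) ^ 2)
        * gradf (θ t ω) i * g t ω i ∂P) =
        ∑ i, ∫ ω, (gradf (θ t ω) i) ^ 2 / ((gradf (θ t ω) i) ^ 2 + (σ t ω i) ^ 2)
          * (gradf (θ t ω) i) ^ 2 ∂P :=
      Finset.sum_congr rfl (fun i _ => keyA i)
    have h2 : (∑ i, ∫ ω, ((gradf (θ t ω) i) ^ 2 / ((gradf (θ t ω) i) ^ 2 + (σ t ω i) ^ 2)) ^ 2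
        * (g t ω i) ^ 2 ∂P) =
        ∑ i, ∫ ω, (gradf (θ t ω) i) ^ 2 / ((gradf (θ t ω) i) ^ 2 + (σ t ω i) ^ 2)
          * (gradf (θ t ω) i) ^ 2 ∂P :=
      Finset.sum_congr rfl (fun i _ => keyB i)
    rw [h1, h2] at hIneq1
    have hLL : -(1 / L) + 1 / (2 * L) = -(1 / (2 * L)) := by
      rw [neg_add_eq_iff_eq_add]
      field_simp
      ring
    have h4 : (-(1 / L)) * (∑ i, ∫ ω, (gradf (θ t ω) i) ^ 2 / ((gradf (θ t ω) i) ^ 2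
          + (σ t ω i) ^ 2) * (gradf (θ t ω) i) ^ 2 ∂P)
        + (1 / (2 * L)) * (∑ i, ∫ ω, (gradf (θ t ω) i) ^ 2 / ((gradf (θ t ω) i) ^ 2
          + (σ t ω i) ^ 2) * (gradf (θ t ω) i) ^ 2 ∂P)
        = -((1 / (2 * L)) * (∑ i, ∫ ω, (gradf (θ t ω) i) ^ 2 / ((gradf (θ t ω) i) ^ 2
          + (σ t ω i) ^ 2) * (gradf (θ t ω) i) ^ 2 ∂P)) := by
      rw [← add_mul, hLL]
      ring
    linarith [hIneq1, h4]
  -- Titu lower bound pointwise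
  have hmn : 0 < min μ L := lt_min hμ hL
  have hYpos : ∀ ω, 0 < (1 + c_v) * (∑ i, (gradf (θ t ω) i) ^ 2) + M_v := fun ω => by
    nlinarith [hX0 ω]
  have hptT : ∀ ω, (∑ i, (gradf (θ t ω) i) ^ 2) ^ 2
      / ((1 + c_v) * (∑ i, (gradf (θ t ω) i) ^ 2) + M_v) ≤
      ∑ i, (gradf (θ t ω) i) ^ 2 / ((gradf (θ t ω) i) ^ 2 + (σ t ω i) ^ 2)
        * (gradf (θ t ω) i) ^ 2 := by
    intro ω
    have hYb : (∑ i, ((gradf (θ t ω) i) ^ 2 + (σ t ω i) ^ 2)) ≤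
        (1 + c_v) * (∑ i, (gradf (θ t ω) i) ^ 2) + M_v := by
      rw [Finset.sum_add_distrib]
      have hn := hnoise t ω
      rw [svag_norm_sq (gradf (θ t ω))] at hn
      nlinarith [hn]
    have hT := svag_titu (fun i => (gradf (θ t ω) i) ^ 2)
      (fun i => (gradf (θ t ω) i) ^ 2 + (σ t ω i) ^ 2)
      ((1 + c_v) * (∑ i, (gradf (θ t ω) i) ^ 2) + M_v)
      (fun i => sq_nonneg _) (fun i => le_add_of_nonneg_right (sq_nonneg _))
      hYb (hYpos ω)
    calc (∑ i, (gradf (θ t ω) i) ^ 2) ^ 2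
        / ((1 + c_v) * (∑ i, (gradf (θ t ω) i) ^ 2) + M_v)
        ≤ ∑ i, ((gradf (θ t ω) i) ^ 2) ^ 2 / ((gradf (θ t ω) i) ^ 2 + (σ t ω i) ^ 2) := hT
      _ = ∑ i, (gradf (θ t ω) i) ^ 2 / ((gradf (θ t ω) i) ^ 2 + (σ t ω i) ^ 2)
          * (gradf (θ t ω) i) ^ 2 := by
        apply Finset.sum_congr rfl
        intro i _
        ring
  have hYmeas : Measurable (fun ω => (1 + c_v) * (∑ i, (gradf (θ t ω) i) ^ 2) + M_v) :=
    (hXmeas.const_mul _).add measurable_const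
  have intX2Y : Integrable (fun ω => (∑ i, (gradf (θ t ω) i) ^ 2) ^ 2
      / ((1 + c_v) * (∑ i, (gradf (θ t ω) i) ^ 2) + M_v)) P := by
    apply Integrable.mono' intX ((hXmeas.pow_const 2).div hYmeas).aestronglyMeasurable
    filter_upwards with ω
    simp only [Pi.mul_apply, Pi.div_apply, Pi.sub_apply, Pi.pow_apply]
    rw [Real.norm_eq_abs, abs_of_nonneg (div_nonneg (sq_nonneg _) (hYpos ω).le)]
    rw [div_le_iff₀ (hYpos ω)]
    nlinarith [mul_nonneg hc_v.le (sq_nonneg (∑ i, (gradf (θ t ω) i) ^ 2)),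
      mul_nonneg hM_v.le (hX0 ω)]
  have intJ : Integrable (fun ω =>
      ∑ i, (gradf (θ t ω) i) ^ 2 / ((gradf (θ t ω) i) ^ 2 + (σ t ω i) ^ 2)
        * (gradf (θ t ω) i) ^ 2) P := by
    apply Integrable.mono' intX
      (Finset.measurable_sum _ (fun i _ =>
        (hγmeas i).mul ((hDmeas i).pow_const 2))).aestronglyMeasurable
    filter_upwards with ω
    simp only [Pi.mul_apply, Pi.div_apply, Pi.sub_apply, Pi.pow_apply]
    rw [Real.norm_eq_abs, abs_of_nonneg (Finset.sum_nonneg fun i _ =>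
      mul_nonneg (hγ0 i ω) (sq_nonneg _))]
    apply Finset.sum_le_sum
    intro i _
    exact mul_le_of_le_one_left (sq_nonneg _) (hγ1 i ω)
  have intY : Integrable (fun ω =>
      (1 + c_v) * (∑ i, (gradf (θ t ω) i) ^ 2) + M_v) P :=
    (intX.const_mul _).add (integrable_const _)
  set eT := ∫ ω, (f (θ t ω) - fstar) ∂P with heT
  set EI := ∫ ω, (∑ i, (gradf (θ t ω) i) ^ 2) ∂P with hEIdef
  have hI2eq : (∫ ω, ((1 + c_v) * (∑ i, (gradf (θ t ω) i) ^ 2) + M_v) ∂P) =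
      (1 + c_v) * EI + M_v := by
    rw [integral_add (intX.const_mul _) (integrable_const _), integral_const_mul, integral_const]
    simp [hEIdef]
  have hI1nn : 0 ≤ EI := integral_nonneg (fun ω => hX0 ω)
  have hYIpos : 0 < (1 + c_v) * EI + M_v := by nlinarith
  -- Cauchy-Schwarz for integrals
  have ptCS : ∀ ω, 2 * (EI / ((1 + c_v) * EI + M_v)) * (∑ i, (gradf (θ t ω) i) ^ 2)
      - (EI / ((1 + c_v) * EI + M_v)) ^ 2
        * ((1 + c_v) * (∑ i, (gradf (θ t ω) i) ^ 2) + M_v)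
      ≤ (∑ i, (gradf (θ t ω) i) ^ 2) ^ 2
        / ((1 + c_v) * (∑ i, (gradf (θ t ω) i) ^ 2) + M_v) := by
    intro ω
    have hY := hYpos ω
    have hkey : (∑ i, (gradf (θ t ω) i) ^ 2) ^ 2
        / ((1 + c_v) * (∑ i, (gradf (θ t ω) i) ^ 2) + M_v)
        - (2 * (EI / ((1 + c_v) * EI + M_v)) * (∑ i, (gradf (θ t ω) i) ^ 2)
          - (EI / ((1 + c_v) * EI + M_v)) ^ 2
            * ((1 + c_v) * (∑ i, (gradf (θ t ω) i) ^ 2) + M_v)) =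
        ((∑ i, (gradf (θ t ω) i) ^ 2) - (EI / ((1 + c_v) * EI + M_v))
          * ((1 + c_v) * (∑ i, (gradf (θ t ω) i) ^ 2) + M_v)) ^ 2
          / ((1 + c_v) * (∑ i, (gradf (θ t ω) i) ^ 2) + M_v) := by
      field_simp
      ring
    have h2 : 0 ≤ ((∑ i, (gradf (θ t ω) i) ^ 2) - (EI / ((1 + c_v) * EI + M_v))
        * ((1 + c_v) * (∑ i, (gradf (θ t ω) i) ^ 2) + M_v)) ^ 2
        / ((1 + c_v) * (∑ i, (gradf (θ t ω) i) ^ 2) + M_v) :=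
      div_nonneg (sq_nonneg _) hY.le
    linarith
  have hCS1 : (∫ ω, (2 * (EI / ((1 + c_v) * EI + M_v)) * (∑ i, (gradf (θ t ω) i) ^ 2)
      - (EI / ((1 + c_v) * EI + M_v)) ^ 2
        * ((1 + c_v) * (∑ i, (gradf (θ t ω) i) ^ 2) + M_v)) ∂P)
      ≤ ∫ ω, (∑ i, (gradf (θ t ω) i) ^ 2) ^ 2
        / ((1 + c_v) * (∑ i, (gradf (θ t ω) i) ^ 2) + M_v) ∂P :=
    integral_mono ((intX.const_mul _).sub (intY.const_mul _)) intX2Y ptCS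
  have hCS2 : (∫ ω, (2 * (EI / ((1 + c_v) * EI + M_v)) * (∑ i, (gradf (θ t ω) i) ^ 2)
      - (EI / ((1 + c_v) * EI + M_v)) ^ 2
        * ((1 + c_v) * (∑ i, (gradf (θ t ω) i) ^ 2) + M_v)) ∂P) =
      2 * (EI / ((1 + c_v) * EI + M_v)) * EI
        - (EI / ((1 + c_v) * EI + M_v)) ^ 2 * ((1 + c_v) * EI + M_v) := by
    rw [integral_sub (intX.const_mul _) (intY.const_mul _), integral_const_mul,
      integral_const_mul, hI2eq]
  have hCS3 : 2 * (EI / ((1 + c_v) * EI + M_v)) * EI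
      - (EI / ((1 + c_v) * EI + M_v)) ^ 2 * ((1 + c_v) * EI + M_v)
      = EI ^ 2 / ((1 + c_v) * EI + M_v) := by
    field_simp
    ring
  have hJlow : EI ^ 2 / ((1 + c_v) * EI + M_v) ≤
      ∫ ω, (∑ i, (gradf (θ t ω) i) ^ 2 / ((gradf (θ t ω) i) ^ 2 + (σ t ω i) ^ 2)
        * (gradf (θ t ω) i) ^ 2) ∂P := by
    have h1 : (∫ ω, (∑ i, (gradf (θ t ω) i) ^ 2) ^ 2
        / ((1 + c_v) * (∑ i, (gradf (θ t ω) i) ^ 2) + M_v) ∂P) ≤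
        ∫ ω, (∑ i, (gradf (θ t ω) i) ^ 2 / ((gradf (θ t ω) i) ^ 2 + (σ t ω i) ^ 2)
          * (gradf (θ t ω) i) ^ 2) ∂P :=
      integral_mono intX2Y intJ hptT
    rw [← hCS3, ← hCS2]
    linarith [hCS1]
  -- strong convexity lower bound
  have he0 : 0 ≤ eT := integral_nonneg (fun ω => sub_nonneg.2 (hmin _))
  have hI1ge : 2 * min μ L * eT ≤ EI := by
    have hpt2 : ∀ ω, 2 * min μ L * (f (θ t ω) - fstar) ≤ ∑ i, (gradf (θ t ω) i) ^ 2 := by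
      intro ω
      have h1 := svag_grad_sq_ge f gradf μ hμ hsc fstar hatt (θ t ω)
      rw [svag_norm_sq (gradf (θ t ω))] at h1
      nlinarith [min_le_left μ L, sub_nonneg.2 (hmin (θ t ω))]
    have h2 := integral_mono (intsub.const_mul (2 * min μ L)) intX hpt2
    rwa [integral_const_mul] at h2
  have hmono := svag_sq_div_mono (1 + c_v) M_v (2 * min μ L * eT) EI
    (by linarith) hM_v (by positivity) hI1ge
  -- final assembly
  have hsub : ∀ s : ℕ, (∫ ω, (f (θ s ω) - fstar) ∂P) = (∫ ω, f (θ s ω) ∂P) - fstar := by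
    intro s
    rw [integral_sub (hintf s) (integrable_const _), integral_const]
    simp
  have hsumint : (∑ i, ∫ ω, (gradf (θ t ω) i) ^ 2 / ((gradf (θ t ω) i) ^ 2 + (σ t ω i) ^ 2)
      * (gradf (θ t ω) i) ^ 2 ∂P) =
      ∫ ω, (∑ i, (gradf (θ t ω) i) ^ 2 / ((gradf (θ t ω) i) ^ 2 + (σ t ω i) ^ 2)
        * (gradf (θ t ω) i) ^ 2) ∂P :=
    (integral_finset_sum _ (fun i _ => intγD2 i)).symm
  have hden : 0 < 2 * min μ L * (1 + c_v) * eT + M_v := by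
    have h1 : 0 ≤ 2 * min μ L * (1 + c_v) * eT :=
      mul_nonneg (mul_nonneg (by linarith) (by linarith)) he0
    linarith
  have hRfin : 1 / (2 * L) * ((2 * min μ L * eT) ^ 2 / ((1 + c_v) * (2 * min μ L * eT) + M_v))
      = 2 * (min μ L) ^ 2 / L * eT ^ 2 / (2 * min μ L * (1 + c_v) * eT + M_v) := by
    rw [show (1 + c_v) * (2 * min μ L * eT) + M_v = 2 * min μ L * (1 + c_v) * eT + M_v
      from by ring]
    field_simp [hden.ne', hL.ne']
  have hchain : 2 * (min μ L) ^ 2 / L * eT ^ 2 / (2 * min μ L * (1 + c_v) * eT + M_v)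
      ≤ 1 / (2 * L) * (∑ i, ∫ ω, (gradf (θ t ω) i) ^ 2 / ((gradf (θ t ω) i) ^ 2
        + (σ t ω i) ^ 2) * (gradf (θ t ω) i) ^ 2 ∂P) := by
    rw [← hRfin, hsumint]
    apply mul_le_mul_of_nonneg_left _ (by positivity)
    calc (2 * min μ L * eT) ^ 2 / ((1 + c_v) * (2 * min μ L * eT) + M_v)
        ≤ EI ^ 2 / ((1 + c_v) * EI + M_v) := hmono
      _ ≤ _ := hJlow
  rw [hsub (t + 1), hsub t] at *
  linarith [hE, hchain]


/-- Convergence of idealized SVAG: under `μ`-strong convexity and `L`-smoothness, with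
conditionally unbiased stochastic gradients, exact variance adaptation factors
`γ_{t,i} = ∇f_{t,i}²/(∇f_{t,i}² + σ_{t,i}²)`, step size `1/L`, and the noise bound
`Σ_i σ_{t,i}² ≤ c_v‖∇f(θ_t)‖² + M_v`, the expected suboptimality is `O(1/t)`. -/
theorem svag_convergence (d : ℕ) {Ω : Type*} [MeasurableSpace Ω]
    (P : Measure Ω) [IsProbabilityMeasure P]
    (f : EuclideanSpace ℝ (Fin d) → ℝ)
    (gradf : EuclideanSpace ℝ (Fin d) → EuclideanSpace ℝ (Fin d))
    (μ L : ℝ) (hμ : 0 < μ) (hL : 0 < L)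
    (hgrad : ∀ x, HasGradientAt f (gradf x) x)
    (hsc : ∀ x y, f y ≥ f x + inner ℝ (gradf x) (y - x) + μ / 2 * ‖y - x‖ ^ 2)
    (hsm : ∀ x y, ‖gradf x - gradf y‖ ≤ L * ‖x - y‖)
    (fstar : ℝ) (hmin : ∀ x, fstar ≤ f x) (hatt : ∃ x, f x = fstar)
    (θ : ℕ → Ω → EuclideanSpace ℝ (Fin d))
    (g : ℕ → Ω → EuclideanSpace ℝ (Fin d)) (σ : ℕ → Ω → Fin d → ℝ)
    (hmeasθ : ∀ t, Measurable (θ t)) (hmeasg : ∀ t, Measurable (g t))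
    (hmeasσ : ∀ t i, Measurable[MeasurableSpace.comap (θ t) inferInstance]
      (fun ω => σ t ω i))
    (hintf : ∀ t, Integrable (fun ω => f (θ t ω)) P)
    (hintg2 : ∀ t i, Integrable (fun ω => (g t ω i) ^ 2) P)
    -- conditionally unbiased stochastic gradients
    (hmean : ∀ t i,
      P[fun ω => g t ω i | MeasurableSpace.comap (θ t) inferInstance]
        =ᵐ[P] fun ω => gradf (θ t ω) i)
    -- conditional element-wise variances σ_{t,i}²
    (hvar : ∀ t i,
      P[fun ω => (g t ω i - gradf (θ t ω) i) ^ 2 | MeasurableSpace.comap (θ t) inferInstance]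
        =ᵐ[P] fun ω => (σ t ω i) ^ 2)
    -- SVAG update with exact variance adaptation factors and global step size 1/L
    (hstep : ∀ t ω i, θ (t + 1) ω i =
      θ t ω i - (1 / L) *
        ((gradf (θ t ω) i) ^ 2 / ((gradf (θ t ω) i) ^ 2 + (σ t ω i) ^ 2) * g t ω i))
    (c_v M_v : ℝ) (hc_v : 0 < c_v) (hM_v : 0 < M_v)
    (hnoise : ∀ t ω, ∑ i, (σ t ω i) ^ 2 ≤ c_v * ‖gradf (θ t ω)‖ ^ 2 + M_v) :
    ∃ C : ℝ, ∀ t : ℕ, 0 < t → ∫ ω, (f (θ t ω) - fstar) ∂P ≤ C / t := by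
  have hmn : 0 < min μ L := lt_min hμ hL
  have hK : 0 < 2 * (min μ L) ^ 2 / L := div_pos (by nlinarith [mul_pos hmn hmn]) hL
  have hA : 0 < 2 * min μ L * (1 + c_v) := mul_pos (by linarith) (by linarith)
  have hKA : 2 * (min μ L) ^ 2 / L ≤ 2 * min μ L * (1 + c_v) := by
    rw [div_le_iff₀ hL]
    have h2 : 2 * min μ L * min μ L ≤ 2 * min μ L * L :=
      mul_le_mul_of_nonneg_left (min_le_right μ L) (by linarith)
    have h3 : 0 ≤ c_v * (2 * min μ L * L) :=
      mul_nonneg hc_v.le (by nlinarith [mul_pos hmn hL])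
    nlinarith
  exact svag_rec (fun s => ∫ ω, (f (θ s ω) - fstar) ∂P)
    (2 * (min μ L) ^ 2 / L) (2 * min μ L * (1 + c_v)) M_v hK hA hM_v hKA
    (fun s => integral_nonneg fun ω => sub_nonneg.2 (hmin _))
    (fun s => svag_onestep d P f gradf μ L hμ hL hgrad hsc hsm fstar hmin hatt θ g σ
      hmeasθ hmeasg hmeasσ hintf hintg2 hmean hvar hstep c_v M_v hc_v hM_v hnoise s)
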